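/- Let n ≥ 2 and x : {1,…,n} → ℝ. Suppose the subset S ⊆ {1,…,n} with both S and its complement S^c nonempty minimizes the 2-means cost W(S) among all subsets with both parts nonempty. If μ_S < μ_{S^c}, then x_i ≤ x_j for every i ∈ S and every j ∈ S^c; i.e., an optimal 2-means clustering of points on the real line is linearly separated. -/

import Mathlib

/-- The mean of `x` over the subset `T` (0 if `T` is empty, by convention `0/0 = 0`). -/
noncomputable def clusterMean {n : ℕ} (x : Fin n → ℝ) (T : Finset (Fin n)) : ℝ :=
  (∑ i ∈ T, x i) / (T.card : ℝ)

/-- The 2-means cost of the partition `{S, Sᶜ}`: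
`W(S) = ∑_{i∈S} (x_i − μ_S)² + ∑_{i∈Sᶜ} (x_i − μ_{Sᶜ})²`. -/
noncomputable def twoMeansCost {n : ℕ} (x : Fin n → ℝ) (S : Finset (Fin n)) : ℝ :=
  (∑ i ∈ S, (x i - clusterMean x S) ^ 2) + ∑ i ∈ Sᶜ, (x i - clusterMean x Sᶜ) ^ 2

/-- The mean minimizes the sum of squared deviations. -/
lemma sum_sq_mean_le {n : ℕ} (x : Fin n → ℝ) (T : Finset (Fin n)) (c : ℝ) :
    ∑ i ∈ T, (x i - clusterMean x T) ^ 2 ≤ ∑ i ∈ T, (x i - c) ^ 2 := by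
  set m := clusterMean x T with hm
  have hsum : ∑ i ∈ T, x i = (T.card : ℝ) * m := by
    rcases Nat.eq_zero_or_pos T.card with h | h
    · simp [Finset.card_eq_zero.mp h]
    · have hc : (T.card : ℝ) ≠ 0 := by positivity
      rw [hm, clusterMean]; field_simp
  have h1 : ∑ i ∈ T, ((x i - c) ^ 2 - (x i - m) ^ 2)
      = (m - c) * 2 * (∑ i ∈ T, x i) + (T.card : ℝ) * ((c - m) * (c + m)) := by
    have h2 : ∀ i ∈ T, (x i - c) ^ 2 - (x i - m) ^ 2
        = (m - c) * 2 * x i + (c - m) * (c + m) := fun i _ => by ring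
    rw [Finset.sum_congr rfl h2, Finset.sum_add_distrib, ← Finset.mul_sum,
      Finset.sum_const, nsmul_eq_mul]
  rw [Finset.sum_sub_distrib, hsum] at h1
  nlinarith [mul_nonneg (Nat.cast_nonneg T.card : (0:ℝ) ≤ T.card) (sq_nonneg (m - c))]

/-- an optimal 2-means clustering of points on the real line is linearly
separated: if `S` (with `S` and `Sᶜ` nonempty) minimizes the 2-means cost among all such
subsets and `μ_S < μ_{Sᶜ}`, then `x_i ≤ x_j` for every `i ∈ S` and `j ∈ Sᶜ`. -/
theorem twoMeans_optimal_separated (n : ℕ) (hn : 2 ≤ n) (x : Fin n → ℝ)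
    (S : Finset (Fin n)) (hS : S.Nonempty) (hSc : Sᶜ.Nonempty)
    (hopt : ∀ T : Finset (Fin n), T.Nonempty → Tᶜ.Nonempty →
      twoMeansCost x S ≤ twoMeansCost x T)
    (hmean : clusterMean x S < clusterMean x Sᶜ) :
    ∀ i ∈ S, ∀ j ∈ Sᶜ, x i ≤ x j := by
  by_contra hcon
  push_neg at hcon
  obtain ⟨i, hi, j, hj, hij⟩ := hcon
  have hjS : j ∉ S := Finset.mem_compl.mp hj
  have hne : i ≠ j := fun h => hjS (h ▸ hi)
  set a := clusterMean x S with ha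
  set b := clusterMean x Sᶜ with hb
  set T : Finset (Fin n) := insert j (S.erase i) with hT
  have hiT : i ∉ T := by
    simp [hT, hne, Finset.mem_erase]
  have hTc : Tᶜ = insert i (Sᶜ.erase j) := by
    ext k
    by_cases hk : k = i <;> by_cases hk' : k = j <;>
      simp [hT, Finset.mem_erase, Finset.mem_insert, hk, hk', hne, hne.symm, hi, hjS] <;>
      tauto
  have hjE : j ∉ S.erase i := fun h => hjS (Finset.mem_of_mem_erase h)
  have hiE : i ∉ Sᶜ.erase j := fun h => (Finset.mem_compl.mp (Finset.mem_of_mem_erase h)) hi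
  have hTne : T.Nonempty := ⟨j, Finset.mem_insert_self _ _⟩
  have hTcne : Tᶜ.Nonempty := ⟨i, hTc ▸ Finset.mem_insert_self _ _⟩
  have hsumT : ∑ k ∈ T, (x k - a) ^ 2
      = ∑ k ∈ S, (x k - a) ^ 2 - (x i - a) ^ 2 + (x j - a) ^ 2 := by
    rw [hT, Finset.sum_insert hjE, ← Finset.sum_erase_add S _ hi]
    ring
  have hsumTc : ∑ k ∈ Tᶜ, (x k - b) ^ 2
      = ∑ k ∈ Sᶜ, (x k - b) ^ 2 - (x j - b) ^ 2 + (x i - b) ^ 2 := by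
    rw [hTc, Finset.sum_insert hiE, ← Finset.sum_erase_add Sᶜ _ hj]
    ring
  have hbound : twoMeansCost x T ≤ (∑ k ∈ T, (x k - a) ^ 2) + ∑ k ∈ Tᶜ, (x k - b) ^ 2 :=
    add_le_add (sum_sq_mean_le x T a) (sum_sq_mean_le x Tᶜ b)
  have hopt' := hopt T hTne hTcne
  have hWS : twoMeansCost x S = (∑ k ∈ S, (x k - a) ^ 2) + ∑ k ∈ Sᶜ, (x k - b) ^ 2 := rfl
  rw [hsumT, hsumTc] at hbound
  nlinarith [mul_pos (sub_pos.mpr hij) (sub_pos.mpr hmean)]
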